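/- For all integers n ≥ 1, the total number of valleys over all Catalan words of length n equals Σ_{ℓ=1}^{n-1} C(2(n-ℓ)-1, n-ℓ-3), where a summand is taken to be 0 whenever n - ℓ - 3 < 0. -/

import Mathlib

/-- The set of Catalan words of length `n`: words `w` over ℕ with `w 1 = 0` and
`w (i+1) ≤ w i + 1` for all `i`. -/
def CatalanWord (n : ℕ) : Set (List ℕ) :=
  {w | w.length = n ∧ w.getD 0 0 = 0 ∧
    ∀ i, i + 1 < n → w.getD (i + 1) 0 ≤ w.getD i 0 + 1}

/-- Number of `l`-valleys of `w`: occurrences of a factor `a b^l (b+1)` with `a > b`. -/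
def lValleys (l : ℕ) (w : List ℕ) : ℕ :=
  ((Finset.range w.length).filter (fun i =>
    i + l + 1 < w.length ∧
    w.getD (i + 1) 0 < w.getD i 0 ∧
    (∀ j, j < l → w.getD (i + 1 + j) 0 = w.getD (i + 1) 0) ∧
    w.getD (i + l + 1) 0 = w.getD (i + 1) 0 + 1)).card

/-- Total number of valleys of `w` (that is, `l`-valleys for all `l ≥ 1`). -/
def valleys (w : List ℕ) : ℕ :=
  ∑ l ∈ Finset.Icc 1 w.length, lValleys l w


/-- step relation: next value at most previous + 1 -/
def stepR (a b : ℕ) : Prop := b ≤ a + 1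

instance : DecidableRel stepR := fun a b => by unfold stepR; infer_instance

/-- Finset of "continuations after value c" of length k -/
def A : ℕ → ℕ → Finset (List ℕ)
  | c, 0 => {[]}
  | c, (k+1) => (Finset.range (c+2)).biUnion fun x => (A x k).image (x :: ·)

lemma mem_A {c k : ℕ} {w : List ℕ} :
    w ∈ A c k ↔ w.length = k ∧ List.IsChain stepR (c :: w) := by
  induction k generalizing c w with
  | zero =>
    simp [A, List.length_eq_zero_iff]
    rintro rfl; simp
  | succ k ih =>
    simp only [A, Finset.mem_biUnion, Finset.mem_range, Finset.mem_image]
    constructor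
    · rintro ⟨x, hx, t, ht, rfl⟩
      obtain ⟨hlen, hch⟩ := ih.1 ht
      refine ⟨by simp [hlen], ?_⟩
      rw [List.isChain_cons_cons]
      exact ⟨show stepR c x by unfold stepR; omega, hch⟩
    · rintro ⟨hlen, hch⟩
      cases w with
      | nil => simp at hlen
      | cons x t =>
        rw [List.isChain_cons_cons] at hch
        refine ⟨x, ?_, t, ih.2 ⟨by simpa using hlen, hch.2⟩, rfl⟩
        have := hch.1; unfold stepR at this; omega

def R (c k : ℕ) : ℕ := (A c k).card

lemma R_zero (c : ℕ) : R c 0 = 1 := by simp [R, A]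

lemma R_succ (c k : ℕ) : R c (k+1) = ∑ x ∈ Finset.range (c+2), R x k := by
  unfold R
  rw [A, Finset.card_biUnion]
  · refine Finset.sum_congr rfl fun x _ => ?_
    rw [Finset.card_image_of_injective _ (fun a b h => by simpa using h)]
  · intro x _ y _ hxy
    simp only [Finset.disjoint_left, Finset.mem_image]
    rintro w ⟨t, _, rfl⟩ ⟨t', _, h⟩
    injection h with h1 _
    exact hxy h1.symm



def CW (n : ℕ) : Finset (List ℕ) := (A 0 (n-1)).image (0 :: ·)

lemma chain'_iff_getD {w : List ℕ} :
    w.IsChain stepR ↔ (∀ i, i + 1 < w.length → w.getD (i + 1) 0 ≤ w.getD i 0 + 1) := by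
  rw [List.isChain_iff_getElem]
  constructor
  · intro h i hi
    have h1 : i < w.length := by omega
    have h2 : i + 1 < w.length := hi
    rw [List.getD_eq_getElem _ _ h1, List.getD_eq_getElem _ _ h2]
    exact h i (by omega)
  · intro h i hi
    have := h i (by omega)
    rw [List.getD_eq_getElem _ _ (by omega : i < w.length),
      List.getD_eq_getElem _ _ (by omega : i + 1 < w.length)] at this
    exact this

lemma mem_CW {n : ℕ} (hn : 1 ≤ n) {w : List ℕ} :
    w ∈ CW n ↔ w.length = n ∧ w.getD 0 0 = 0 ∧ w.IsChain stepR := by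
  unfold CW
  simp only [Finset.mem_image]
  constructor
  · rintro ⟨t, ht, rfl⟩
    obtain ⟨hlen, hch⟩ := mem_A.1 ht
    exact ⟨by simp [hlen]; omega, rfl, hch⟩
  · rintro ⟨hlen, hhead, hch⟩
    cases w with
    | nil => simp at hlen; omega
    | cons x t =>
      simp only [List.getD_cons_zero] at hhead
      subst hhead
      exact ⟨t, mem_A.2 ⟨by simp at hlen; omega, hch⟩, rfl⟩

lemma CatalanWord_eq {n : ℕ} (hn : 1 ≤ n) : CatalanWord n = ↑(CW n) := by
  ext w
  simp only [Finset.coe_filter, Set.mem_setOf_eq, CatalanWord, Finset.mem_coe,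
    mem_CW hn]
  constructor
  · rintro ⟨h1, h2, h3⟩
    exact ⟨h1, h2, chain'_iff_getD.2 (by rw [h1]; exact h3)⟩
  · rintro ⟨h1, h2, h3⟩
    exact ⟨h1, h2, by rw [← h1]; exact chain'_iff_getD.1 h3⟩

lemma A_getD_le {c k : ℕ} {w : List ℕ} (hw : w ∈ A c k) :
    ∀ i, i < k → w.getD i 0 ≤ c + 1 + i := by
  induction k generalizing c w with
  | zero => intro i hi; omega
  | succ k ih =>
    rw [A] at hw
    simp only [Finset.mem_biUnion, Finset.mem_range, Finset.mem_image] at hw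
    obtain ⟨x, hx, t, ht, rfl⟩ := hw
    intro i hi
    cases i with
    | zero => simpa using by omega
    | succ i =>
      simp only [List.getD_cons_succ]
      have := ih ht i (by omega)
      omega

lemma CW_getD_le {n : ℕ} {w : List ℕ} (hw : w ∈ CW n) :
    ∀ i, w.getD i 0 ≤ i := by
  unfold CW at hw
  simp only [Finset.mem_image] at hw
  obtain ⟨t, ht, rfl⟩ := hw
  intro i
  cases i with
  | zero => simp
  | succ i =>
    simp only [List.getD_cons_succ]
    by_cases hi : i < n - 1
    · have := A_getD_le ht i hi; omega
    · rw [List.getD_eq_default]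
      · omega
      · have := (mem_A.1 ht).1; omega



lemma CW_head {n : ℕ} {w : List ℕ} (hw : w ∈ CW n) : w.getD 0 0 = 0 := by
  unfold CW at hw
  simp only [Finset.mem_image] at hw
  obtain ⟨t, _, rfl⟩ := hw
  simp

lemma R_zero_pair (k : ℕ) : R 0 (k+1) = R 0 k + R 1 k := by
  rw [R_succ]; simp [Finset.sum_range_succ]

lemma R_pair (c k : ℕ) : R (c+1) (k+1) = R c (k+1) + R (c+2) k := by
  rw [R_succ, R_succ, Finset.sum_range_succ]

lemma R_closed (c k : ℕ) :
    (R c k : ℤ) = ((2*k+c+1).choose k : ℤ) - ((2*k+c+1).choose (k+c+2) : ℤ) := by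
  induction k generalizing c with
  | zero =>
    rw [R_zero]
    rw [Nat.choose_eq_zero_of_lt (show 2*0+c+1 < 0+c+2 by omega)]
    simp
  | succ k ih =>
    induction c with
    | zero =>
      rw [R_zero_pair]
      push_cast [ih 0, ih 1]
      have p1 : (2*(k+1)+0+1).choose (k+1)
          = (2*k+2).choose k + (2*k+2).choose (k+1) := by
        rw [show 2*(k+1)+0+1 = (2*k+2)+1 by ring]
        exact Nat.choose_succ_succ _ _
      have p2 : (2*(k+1)+0+1).choose (k+1+0+2)
          = (2*k+2).choose (k+2) + (2*k+2).choose (k+3) := by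
        rw [show 2*(k+1)+0+1 = (2*k+2)+1 by ring, show k+1+0+2 = (k+2)+1 by ring]
        exact Nat.choose_succ_succ _ _
      have p3 : (2*k+2).choose (k+1) = (2*k+1).choose k + (2*k+1).choose (k+1) := by
        rw [show 2*k+2 = (2*k+1)+1 by ring]
        exact Nat.choose_succ_succ _ _
      have p4 : (2*k+2).choose (k+2) = (2*k+1).choose (k+1) + (2*k+1).choose (k+2) := by
        rw [show 2*k+2 = (2*k+1)+1 by ring, show k+2 = (k+1)+1 by ring]
        exact Nat.choose_succ_succ _ _
      have e1 : 2*k+0+1 = 2*k+1 := by ring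
      have e2 : k+0+2 = k+2 := by ring
      have e3 : 2*k+1+1 = 2*k+2 := by ring
      have e4 : k+1+2 = k+3 := by ring
      rw [e1, e2, e3, e4] at *
      push_cast [p1, p2, p3, p4]
      ring
    | succ c ihc =>
      rw [R_pair]
      push_cast [ihc, ih (c+2)]
      have p1 : (2*(k+1)+(c+1)+1).choose (k+1)
          = (2*k+c+3).choose k + (2*k+c+3).choose (k+1) := by
        rw [show 2*(k+1)+(c+1)+1 = (2*k+c+3)+1 by ring]
        exact Nat.choose_succ_succ _ _
      have p2 : (2*(k+1)+(c+1)+1).choose (k+1+(c+1)+2)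
          = (2*k+c+3).choose (k+c+3) + (2*k+c+3).choose (k+c+4) := by
        rw [show 2*(k+1)+(c+1)+1 = (2*k+c+3)+1 by ring, show k+1+(c+1)+2 = (k+c+3)+1 by ring]
        exact Nat.choose_succ_succ _ _
      have e1 : 2*(k+1)+c+1 = 2*k+c+3 := by ring
      have e2 : k+1+c+2 = k+c+3 := by ring
      have e3 : 2*k+(c+2)+1 = 2*k+c+3 := by ring
      have e4 : k+(c+2)+2 = k+c+4 := by ring
      rw [e1, e2, e3, e4] at *
      push_cast [p1, p2]
      ring

lemma tele (M : ℕ) :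
    ∑ b ∈ Finset.range (M+1), R (2*b+4) (M-b) = (2*M+5).choose M := by
  have key : ∀ b ∈ Finset.range (M+1),
      (R (2*b+4) (M-b) : ℤ) = ((2*M+5).choose (M+5+b) : ℤ) - ((2*M+5).choose (M+5+(b+1)) : ℤ) := by
    intro b hb
    rw [Finset.mem_range] at hb
    rw [R_closed]
    have e1 : 2*(M-b)+(2*b+4)+1 = 2*M+5 := by omega
    have e2 : (M-b)+(2*b+4)+2 = M+5+(b+1) := by omega
    rw [e1, e2]
    congr 2
    have h := Nat.choose_symm (show M+5+b ≤ 2*M+5 by omega)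
    rw [show 2*M+5-(M+5+b) = M - b from by omega] at h
    exact h
  have := Finset.sum_congr rfl key
  have hsum : ((∑ b ∈ Finset.range (M+1), R (2*b+4) (M-b) : ℕ) : ℤ)
      = ((2*M+5).choose M : ℤ) := by
    push_cast
    rw [this]
    rw [Finset.sum_range_sub' (fun b => ((2*M+5).choose (M+5+b) : ℤ))]
    rw [Nat.choose_eq_zero_of_lt (show 2*M+5 < M+5+(M+1) by omega)]
    have h5 : (2*M+5).choose (M+5+0) = (2*M+5).choose M := by
      have h := Nat.choose_symm (show M+5 ≤ 2*M+5 by omega)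
      rw [show 2*M+5-(M+5) = M from by omega] at h
      rw [show M+5+0 = M+5 by ring, ← h]
    rw [h5]
    simp
  exact_mod_cast hsum




/-- subtracting a constant from a list all of whose entries are ≥ t preserves chains -/
lemma chain'_sub {t : ℕ} : ∀ {l : List ℕ}, List.IsChain stepR l → (∀ x ∈ l, t ≤ x) →
    List.IsChain stepR (l.map (· - t))
  | [], _, _ => by simp
  | [x], _, _ => by simp
  | (x :: y :: l), h, hall => by
    simp only [List.map_cons]
    rw [List.isChain_cons_cons] at h ⊢
    refine ⟨?_, chain'_sub h.2 (fun z hz => hall z (by simp at hz ⊢; tauto))⟩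
    have hx := hall x (by simp)
    have hy := hall y (by simp)
    have := h.1
    unfold stepR at *
    omega

lemma takeWhile_all {t : ℕ} {u v : List ℕ} (hu : ∀ x ∈ u, t ≤ x)
    (hv : ∀ x ∈ v.head?, x < t) :
    (u ++ v).takeWhile (fun x => t ≤ x) = u := by
  induction u with
  | nil =>
    simp only [List.nil_append]
    cases v with
    | nil => simp
    | cons x v' =>
      apply List.takeWhile_cons_of_neg
      have := hv x (by simp)
      simp; omega
  | cons a u' ih =>
    rw [List.cons_append, List.takeWhile_cons_of_pos (by simp [hu a (by simp)])]
    rw [ih (fun x hx => hu x (by simp [hx]))]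

lemma A_split (c₁ c₂ s : ℕ) :
    A (c₁+c₂+2) s = (Finset.range (s+1)).biUnion fun k₁ =>
      ((A c₁ k₁) ×ˢ (A c₂ (s-k₁))).image fun uv => (uv.1.map (· + (c₂+2))) ++ uv.2 := by
  ext y
  simp only [Finset.mem_biUnion, Finset.mem_range, Finset.mem_image, Finset.mem_product,
    Prod.exists]
  constructor
  · intro hy
    obtain ⟨hlen, hch⟩ := mem_A.1 hy
    set p : ℕ → Bool := fun x => decide (c₂+2 ≤ x) with hp
    set u' := y.takeWhile p with hu'
    set v := y.dropWhile p with hv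
    have hall : ∀ x ∈ u', c₂+2 ≤ x := fun x hx => by
      have := List.mem_takeWhile_imp hx; simpa [hp] using this
    have hky : u'.length ≤ y.length := (y.takeWhile_sublist p).length_le
    have hsplit : u' ++ v = y := List.takeWhile_append_dropWhile (p := p)
    have hk : u'.length < s + 1 := by omega
    refine ⟨u'.length, hk, u'.map (· - (c₂+2)), v, ⟨?_, ?_⟩, ?_⟩
    · -- u ∈ A c₁ k₁
      rw [mem_A]
      refine ⟨by simp, ?_⟩
      have h1 : List.IsChain stepR ((c₁+c₂+2) :: u') :=
        hch.prefix (by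
          obtain ⟨r, hr⟩ := y.takeWhile_prefix p
          exact ⟨r, by rw [List.cons_append, hr]⟩)
      have h2 := chain'_sub (t := c₂+2) h1 (fun x hx => by
        rcases List.mem_cons.1 hx with h | h
        · omega
        · exact hall x h)
      simpa using h2
    · -- v ∈ A c₂ (s - k₁)
      rw [mem_A]
      have hlenv : v.length = s - u'.length := by
        have := congrArg List.length hsplit
        simp at this; omega
      refine ⟨hlenv, ?_⟩
      rw [List.isChain_cons]
      constructor
      · intro z hz
        have := List.head?_dropWhile_not p y
        rw [← hv] at this
        rw [hz] at this
        simp [hp] at this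
        unfold stepR; omega
      · exact (hch.tail).suffix (y.dropWhile_suffix p)
    · -- reconstruction
      rw [List.map_map]
      have : ∀ x ∈ u', ((fun x => x + (c₂+2)) ∘ fun x => x - (c₂+2)) x = id x := by
        intro x hx; have := hall x hx; simp; omega
      rw [List.map_congr_left this, List.map_id]
      exact hsplit
  · rintro ⟨k₁, hk₁, u, v, ⟨hu, hv⟩, rfl⟩
    obtain ⟨hulen, huch⟩ := mem_A.1 hu
    obtain ⟨hvlen, hvch⟩ := mem_A.1 hv
    rw [mem_A]
    constructor
    · simp [hulen, hvlen]; omega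
    · have : ((c₁+c₂+2) : ℕ) :: (u.map (· + (c₂+2)) ++ v)
          = ((c₁ :: u).map (· + (c₂+2))) ++ v := by simp; omega
      rw [this, List.isChain_append]
      refine ⟨?_, hvch.tail, ?_⟩
      · rw [List.isChain_map]
        apply huch.imp
        intro a b h; unfold stepR at *; omega
      · intro x hx z hz
        have hxmem : x ∈ (c₁ :: u).map (· + (c₂+2)) := List.mem_of_mem_getLast? hx
        have hxge : c₂+2 ≤ x := by
          simp only [List.mem_map] at hxmem
          obtain ⟨a, _, rfl⟩ := hxmem
          omega
        have hz' : z ≤ c₂+1 := by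
          rw [List.isChain_cons] at hvch
          exact hvch.1 z hz
        unfold stepR; omega

lemma R_conv (c₁ c₂ s : ℕ) :
    ∑ k₁ ∈ Finset.range (s+1), R c₁ k₁ * R c₂ (s-k₁) = R (c₁+c₂+2) s := by
  classical
  have key : ∀ k₁ (u v : List ℕ), u ∈ A c₁ k₁ → v ∈ A c₂ (s-k₁) →
      ((u.map (· + (c₂+2)) ++ v).takeWhile (fun x => c₂+2 ≤ x)) = u.map (· + (c₂+2)) := by
    intro k₁ u v hu hv
    apply takeWhile_all
    · intro x hx
      simp only [List.mem_map] at hx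
      obtain ⟨a, _, rfl⟩ := hx; omega
    · intro x hx
      have hvch := (mem_A.1 hv).2
      rw [List.isChain_cons] at hvch
      have := hvch.1 x hx
      unfold stepR at this; omega
  unfold R
  rw [A_split, Finset.card_biUnion]
  · refine Finset.sum_congr rfl fun k₁ _ => ?_
    rw [Finset.card_image_of_injOn, Finset.card_product]
    rintro ⟨u₁, v₁⟩ h₁ ⟨u₂, v₂⟩ h₂ heq
    simp only [Finset.mem_coe, Finset.mem_product] at h₁ h₂
    simp only at heq
    have hl₁ : u₁.length = k₁ := (mem_A.1 h₁.1).1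
    have hl₂ : u₂.length = k₁ := (mem_A.1 h₂.1).1
    obtain ⟨he1, he2⟩ := List.append_inj heq (by simp [hl₁, hl₂])
    have : u₁ = u₂ := by
      have := congrArg (List.map (· - (c₂+2))) he1
      simpa [List.map_map, Function.comp_def, Nat.add_sub_cancel] using this
    exact Prod.ext this he2
  · intro k₁ _ k₂ _ hne
    simp only [Finset.disjoint_left, Finset.mem_image, Finset.mem_product, Prod.exists]
    rintro y ⟨u, v, ⟨hu, hv⟩, rfl⟩ ⟨u', v', ⟨hu', hv'⟩, heq⟩
    apply hne
    have e1 := key k₁ u v hu hv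
    have e2 := key k₂ u' v' hu' hv'
    rw [heq] at e2
    rw [e1] at e2
    have := congrArg List.length e2
    simp only [List.length_map] at this
    rw [← (mem_A.1 hu).1, ← (mem_A.1 hu').1, this]



noncomputable def E (j a : ℕ) : ℕ :=
  ((CW j).filter (fun w => a ≤ w.getD (j-1) 0)).card

lemma E_zero_of_ge {j a : ℕ} (ha : j ≤ a) (ha1 : 1 ≤ a) : E j a = 0 := by
  unfold E
  rw [Finset.card_eq_zero, Finset.filter_eq_empty_iff]
  intro w hw
  have h1 := CW_getD_le hw (j-1)
  by_cases hj : j = 0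
  · subst hj
    have := CW_head hw
    simp only [Nat.zero_sub]
    omega
  · omega

lemma card_CW (j : ℕ) : (CW j).card = R 0 (j-1) := by
  unfold CW R
  rw [Finset.card_image_of_injective _ (fun a b h => by simpa using h)]

lemma E_zero_a (j : ℕ) : E j 0 = R 0 (j-1) := by
  unfold E
  rw [Finset.filter_true_of_mem (fun w _ => Nat.zero_le _), card_CW]

lemma E_rec {j a : ℕ} (hj : 1 ≤ j) (ha : 1 ≤ a) :
    E (j+1) a = E (j+1) (a+1) + E j (a-1) := by
  classical
  have hsplit : ((CW (j+1)).filter (fun w => a ≤ w.getD j 0))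
      = ((CW (j+1)).filter (fun w => a+1 ≤ w.getD j 0))
        ∪ ((CW (j+1)).filter (fun w => w.getD j 0 = a)) := by
    ext w
    simp only [Finset.mem_filter, Finset.mem_union]
    constructor
    · rintro ⟨hw, h⟩
      rcases Nat.lt_or_ge a (w.getD j 0) with h' | h'
      · exact Or.inl ⟨hw, h'⟩
      · exact Or.inr ⟨hw, by omega⟩
    · rintro (⟨hw, h⟩ | ⟨hw, h⟩) <;> exact ⟨hw, by omega⟩
  have hdisj : Disjoint ((CW (j+1)).filter (fun w => a+1 ≤ w.getD j 0))
      ((CW (j+1)).filter (fun w => w.getD j 0 = a)) := by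
    rw [Finset.disjoint_left]
    intro w h1 h2
    simp only [Finset.mem_filter] at h1 h2
    omega
  have hcard : ((CW (j+1)).filter (fun w => w.getD j 0 = a)).card = E j (a-1) := by
    unfold E
    apply Finset.card_bij' (fun w _ => w.dropLast) (fun p _ => p ++ [a])
    · -- forward mem
      intro w hw
      simp only [Finset.mem_filter] at hw ⊢
      obtain ⟨hw, hlast⟩ := hw
      obtain ⟨hlen, hhead, hch⟩ := (mem_CW (by omega)).1 hw
      have hne : w ≠ [] := by intro h; rw [h] at hlen; simp at hlen
      have hdl : w.dropLast.length = j := by rw [List.length_dropLast, hlen]; simp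
      have hw' : w = w.dropLast ++ [w.getLast hne] := (List.dropLast_append_getLast hne).symm
      have hlast' : w.getLast hne = a := by
        rw [← hlast]
        conv_rhs => rw [hw']
        rw [List.getD_append_right _ _ _ _ (by omega), hdl]
        simp
      constructor
      · rw [mem_CW (by omega : 1 ≤ j)]
        refine ⟨hdl, ?_, ?_⟩
        · rw [List.getD_eq_getElem _ _ (by omega : 0 < w.dropLast.length)]
          have := List.getElem_dropLast (xs := w) (i := 0) (by omega)
          rw [this]
          rw [List.getD_eq_getElem _ _ (by omega : 0 < w.length)] at hhead
          exact hhead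
        · exact hch.prefix (List.dropLast_prefix w)
      · -- a - 1 ≤ dropLast.getD (j-1)
        have hchain := hch
        conv at hchain => rw [hw']
        rw [List.isChain_append] at hchain
        have hrel := hchain.2.2
        -- last of dropLast related to a
        have hne' : w.dropLast ≠ [] := by
          intro h; rw [h] at hdl; simp at hdl; omega
        have hz := hrel (w.dropLast.getLast hne')
          (by rw [List.getLast?_eq_getLast hne']; rfl) a (by simp [hlast'])
        unfold stepR at hz
        have : w.dropLast.getD (j-1) 0 = w.dropLast.getLast hne' := by
          rw [List.getLast_eq_getElem, List.getD_eq_getElem _ _ (by omega)]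
          congr 1; omega
        omega
    · -- backward mem
      intro p hp
      simp only [Finset.mem_filter] at hp ⊢
      obtain ⟨hp, hlastp⟩ := hp
      obtain ⟨hlen, hhead, hch⟩ := (mem_CW (by omega : 1 ≤ j)).1 hp
      have hne : p ≠ [] := by intro h; rw [h] at hlen; simp at hlen; omega
      constructor
      · rw [mem_CW (by omega)]
        refine ⟨by simp [hlen], ?_, ?_⟩
        · rw [List.getD_append _ _ _ _ (by omega), hhead]
        · rw [List.isChain_append]
          refine ⟨hch, List.isChain_singleton _, ?_⟩
          intro x hx z hz
          simp only [List.head?_cons, Option.mem_def, Option.some.injEq] at hz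
          subst hz
          have hxl : p.getLast hne = x := by
            rw [List.getLast?_eq_getLast hne] at hx
            simpa [eq_comm] using hx
          have : p.getD (j-1) 0 = p.getLast hne := by
            rw [List.getLast_eq_getElem, List.getD_eq_getElem _ _ (by omega)]
            congr 1; omega
          unfold stepR
          omega
      · rw [List.getD_append_right _ _ _ _ (by omega), hlen]
        simp
    · intro w hw
      simp only [Finset.mem_filter] at hw
      obtain ⟨hw', hlast⟩ := hw
      obtain ⟨hlen, _, _⟩ := (mem_CW (by omega)).1 hw'
      have hne : w ≠ [] := by intro h; rw [h] at hlen; simp at hlen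
      have hlast' : w.getLast hne = a := by
        rw [← hlast, List.getLast_eq_getElem, List.getD_eq_getElem _ _ (by omega)]
        congr 1; omega
      rw [← hlast']
      exact List.dropLast_append_getLast hne
    · intro p _
      simp
  rw [E, E]
  simp only [Nat.add_sub_cancel]
  rw [hsplit, Finset.card_union_of_disjoint hdisj, hcard]


lemma E_eq_R (j : ℕ) : ∀ a, 1 ≤ a → E j a = if a + 1 ≤ j then R a (j-a-1) else 0 := by
  induction j using Nat.strong_induction_on with
  | _ j ihj =>
  suffices H : ∀ d a, 1 ≤ a → j - a ≤ d → E j a = if a + 1 ≤ j then R a (j-a-1) else 0 by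
    intro a ha; exact H j a ha (by omega)
  intro d
  induction d with
  | zero =>
    intro a ha hda
    rw [E_zero_of_ge (by omega) ha, if_neg (by omega)]
  | succ d ihd =>
    intro a ha hda
    by_cases hcase : j ≤ a
    · rw [E_zero_of_ge hcase ha, if_neg (by omega)]
    · obtain ⟨j', rfl⟩ : ∃ j', j = j'+1 := ⟨j-1, by omega⟩
      have hj' : 1 ≤ j' := by omega
      rw [E_rec hj' ha, ihd (a+1) (by omega) (by omega)]
      rw [if_pos (by omega : a + 1 ≤ j' + 1)]
      by_cases ha1 : a = 1
      · subst ha1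
        rw [show (1:ℕ)-1 = 0 from rfl, E_zero_a]
        by_cases hj1 : j' = 1
        · subst hj1
          rw [if_neg (by omega)]
          simp [R_zero]
        · rw [if_pos (by omega)]
          obtain ⟨k, rfl⟩ : ∃ k, j' = k+2 := ⟨j'-2, by omega⟩
          rw [show k+2+1-(1+1)-1 = k by omega, show k+2-1 = k+1 by omega,
            show k+2+1-1-1 = k+1 by omega]
          have hp := R_pair 0 k
          norm_num at hp ⊢
          omega
      · rw [ihj j' (by omega) (a-1) (by omega)]
        rw [if_pos (by omega : a - 1 + 1 ≤ j')]
        by_cases haj : a = j'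
        · subst haj
          rw [if_neg (by omega)]
          obtain ⟨b, rfl⟩ : ∃ b, a = b+1 := ⟨a-1, by omega⟩
          rw [show b+1-1 = b by omega, show b+1-b-1 = 0 by omega,
            show b+1+1-(b+1)-1 = 0 by omega]
          simp [R_zero]
        · rw [if_pos (by omega)]
          obtain ⟨b, rfl⟩ : ∃ b, a = b+1 := ⟨a-1, by omega⟩
          obtain ⟨k, hk⟩ : ∃ k, j' = b+k+2 := ⟨j'-b-2, by omega⟩
          subst hk
          rw [show b+1-1 = b by omega, show b+k+2-b-1 = k+1 by omega,
            show b+k+2+1-(b+1+1)-1 = k by omega, show b+k+2+1-(b+1)-1 = k+1 by omega]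
          rw [show b+1+1 = b+2 by omega]
          rw [R_pair b k]
          omega



lemma chain'_replicate_step (l b : ℕ) : List.IsChain stepR (List.replicate l b) := by
  induction l with
  | zero => simp
  | succ l ih =>
    cases l with
    | zero => simp
    | succ m =>
      rw [List.replicate_succ, List.replicate_succ, List.isChain_cons_cons,
        ← List.replicate_succ]
      exact ⟨show b ≤ b + 1 by omega, by rw [List.replicate_succ]; exact ih⟩

lemma getD_eq {w : List ℕ} {i : ℕ} (h : i < w.length) : w.getD i 0 = w[i] :=
  List.getD_eq_getElem w 0 h

set_option maxHeartbeats 1000000 in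
lemma occ_card {n i l b : ℕ} (hl : 1 ≤ l) (hil : i + l + 1 < n) :
    ((CW n).filter fun w => (w.getD (i+1) 0 < w.getD i 0 ∧
        (∀ j, j < l → w.getD (i+1+j) 0 = w.getD (i+1) 0) ∧
        w.getD (i+l+1) 0 = w.getD (i+1) 0 + 1) ∧ w.getD (i+1) 0 = b).card
    = (((CW (i+1)).filter fun p => b+1 ≤ p.getD i 0) ×ˢ A (b+1) (n-(i+l+2))).card := by
  classical
  apply Finset.card_bij' (fun w _ => (w.take (i+1), w.drop (i+l+2)))
    (fun pv _ => pv.1 ++ (List.replicate l b ++ (b+1) :: pv.2))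
  · -- forward membership
    intro w hw
    simp only [Finset.mem_filter, Finset.mem_product] at hw ⊢
    obtain ⟨hw, ⟨hdesc, hrun, hup⟩, hb⟩ := hw
    obtain ⟨hlen, hhead, hch⟩ := (mem_CW (by omega)).1 hw
    have htl : (w.take (i+1)).length = i + 1 := by
      rw [List.length_take]; omega
    constructor
    · refine ⟨(mem_CW (by omega)).2 ⟨htl, ?_, hch.prefix (List.take_prefix _ _)⟩, ?_⟩
      · rw [getD_eq (show 0 < (w.take (i+1)).length by omega), List.getElem_take,
          ← getD_eq (show 0 < w.length by omega)]
        exact hhead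
      · rw [getD_eq (show i < (w.take (i+1)).length by omega), List.getElem_take,
          ← getD_eq (show i < w.length by omega)]
        omega
    · rw [mem_A]
      refine ⟨by rw [List.length_drop, hlen], ?_⟩
      rw [List.isChain_cons]
      constructor
      · intro y hy
        have hne : w.drop (i+l+2) ≠ [] := by
          intro h; rw [h] at hy; simp at hy
        have hlt : i+l+2 < n := by
          have := List.length_pos_iff.2 hne
          rw [List.length_drop] at this; omega
        have hy' : y = w[i+l+2]'(by omega) := by
          have h0 : (w.drop (i+l+2)).head? =
              some ((w.drop (i+l+2))[0]'(by rw [List.length_drop]; omega)) := by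
            rw [List.head?_eq_getElem?, List.getElem?_eq_getElem]
          rw [h0] at hy
          simp only [Option.mem_def, Option.some.injEq] at hy
          rw [← hy, List.getElem_drop]
        have hstep := List.isChain_iff_getElem.1 hch (i+l+1) (by omega)
        unfold stepR at hstep
        have hlink : w.getD (i+l+1) 0 = w[i+l+1]'(by omega) :=
          getD_eq (show i+l+1 < w.length by omega)
        show y ≤ b + 1 + 1
        have hcg : w[i+l+1+1]'(by omega) = w[i+l+2]'(by omega) := by
          congr 1
        omega
      · exact hch.suffix (List.drop_suffix _ _)
  · -- backward membership
    rintro ⟨p, v⟩ hpv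
    simp only [Finset.mem_filter, Finset.mem_product] at hpv ⊢
    obtain ⟨⟨hp, hplast⟩, hv⟩ := hpv
    obtain ⟨hplen, hphead, hpch⟩ := (mem_CW (by omega)).1 hp
    obtain ⟨hvlen, hvch⟩ := mem_A.1 hv
    have hpne : p ≠ [] := by intro h; rw [h] at hplen; simp at hplen
    have hplast' : p.getD i 0 = p.getLast hpne := by
      rw [List.getLast_eq_getElem, getD_eq (show i < p.length by omega)]
      congr 1; omega
    have hwlen : (p ++ (List.replicate l b ++ (b+1) :: v)).length = n := by
      simp [hplen, hvlen]; omega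
    have hgd : ∀ j,
        (p ++ (List.replicate l b ++ (b+1) :: v)).getD (i+1+j) 0
          = (List.replicate l b ++ (b+1) :: v).getD j 0 := by
      intro j
      rw [List.getD_append_right _ _ _ _ (by omega : p.length ≤ i+1+j), hplen]
      congr 1; omega
    have hgdrep : ∀ j, j < l → (List.replicate l b ++ (b+1) :: v).getD j 0 = b := by
      intro j hj
      rw [getD_eq (show j < (List.replicate l b ++ (b+1) :: v).length by simp; omega),
        List.getElem_append_left (by simp; omega)]
      exact List.getElem_replicate ..
    have hgdl : (List.replicate l b ++ (b+1) :: v).getD l 0 = b + 1 := by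
      rw [getD_eq (show l < (List.replicate l b ++ (b+1) :: v).length by simp),
        List.getElem_append_right (by simp)]
      simp
    have hchain : List.IsChain stepR (p ++ (List.replicate l b ++ (b+1) :: v)) := by
      rw [List.isChain_append]
      refine ⟨hpch, ?_, ?_⟩
      · rw [List.isChain_append]
        refine ⟨chain'_replicate_step l b, hvch, ?_⟩
        intro x hx y hy
        rw [List.getLast?_replicate, if_neg (by omega)] at hx
        rw [List.head?_cons] at hy
        simp only [Option.mem_def, Option.some.injEq] at hx hy
        subst hx; subst hy
        show b + 1 ≤ b + 1; omega
      · intro x hx y hy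
        rw [List.getLast?_eq_getLast hpne] at hx
        simp only [Option.mem_def, Option.some.injEq] at hx
        subst hx
        have hyb : y = b := by
          obtain ⟨m, rfl⟩ : ∃ m, l = m + 1 := ⟨l - 1, by omega⟩
          rw [List.replicate_succ, List.cons_append, List.head?_cons] at hy
          simpa [eq_comm] using hy
        show stepR (p.getLast hpne) y
        unfold stepR
        omega
    have h0' := hgd 0
    rw [show i+1+0 = i+1 by omega] at h0'
    refine ⟨(mem_CW (by omega)).2 ⟨hwlen, ?_, hchain⟩, ⟨?_, ?_, ?_⟩, ?_⟩
    · rw [List.getD_append _ _ _ _ (by omega), hphead]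
    · -- descent
      rw [List.getD_append _ _ _ _ (show i < p.length by omega)]
      rw [h0', hgdrep 0 (by omega)]
      omega
    · intro j hj
      rw [h0', hgd j, hgdrep 0 (by omega), hgdrep j (by omega)]
    · have hl' := hgd l
      rw [show i+1+l = i+l+1 by omega] at hl'
      rw [h0', hl', hgdrep 0 (by omega), hgdl]
    · rw [h0', hgdrep 0 (by omega)]
  · -- left inverse
    intro w hw
    simp only [Finset.mem_filter] at hw
    obtain ⟨hw', ⟨hdesc, hrun, hup⟩, hb⟩ := hw
    obtain ⟨hlen, hhead, hch⟩ := (mem_CW (by omega)).1 hw'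
    have hrep : (w.drop (i+1)).take l = List.replicate l b := by
      apply List.ext_getElem
      · rw [List.length_take, List.length_drop, List.length_replicate, hlen]; omega
      · intro j h1 h2
        rw [List.length_take, List.length_drop, hlen] at h1
        rw [List.getElem_take, List.getElem_drop, List.getElem_replicate]
        have h := hrun j (by omega)
        rw [getD_eq (show i+1+j < w.length by omega), hb] at h
        exact h
    have hsel : (w.drop (i+l+1)).take 1 = [b+1] := by
      apply List.ext_getElem
      · rw [List.length_take, List.length_drop, hlen]; simp; omega
      · intro j h1 h2
        simp only [List.length_singleton] at h2
        have hj0 : j = 0 := by omega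
        subst hj0
        rw [List.getElem_take, List.getElem_drop]
        have h := hup
        rw [show i+l+1 = i+l+1+0 by omega] at h
        rw [getD_eq (show i+l+1+0 < w.length by omega), hb] at h
        simp only [List.getElem_singleton]
        exact h
    simp only
    conv_rhs => rw [← List.take_append_drop (i+1) w]
    congr 1
    conv_rhs => rw [← List.take_append_drop l (w.drop (i+1))]
    rw [hrep]
    congr 1
    rw [List.drop_drop, show i+1+l = i+l+1 by omega]
    conv_rhs => rw [← List.take_append_drop 1 (w.drop (i+l+1))]
    rw [hsel, List.drop_drop, show i+l+1+1 = i+l+2 by omega]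
    rfl
  · -- right inverse
    rintro ⟨p, v⟩ hpv
    simp only [Finset.mem_filter, Finset.mem_product] at hpv
    obtain ⟨⟨hp, _⟩, hv⟩ := hpv
    obtain ⟨hplen, _, _⟩ := (mem_CW (by omega)).1 hp
    obtain ⟨hvlen, _⟩ := mem_A.1 hv
    have h1 : (p ++ (List.replicate l b ++ (b+1) :: v)).take (i+1) = p :=
      List.take_left' hplen
    have h2 : (p ++ (List.replicate l b ++ (b+1) :: v)).drop (i+l+2) = v := by
      rw [show i+l+2 = p.length + (l+1) by omega, List.drop_append]
      rw [show l+1 = (List.replicate l b).length + 1 by simp, List.drop_append]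
      simp
    simp only
    rw [h1, h2]
theorem total_valleys (n : ℕ) (hn : 1 ≤ n) :
    ∑ᶠ w ∈ CatalanWord n, valleys w =
      ∑ l ∈ Finset.Icc 1 (n - 1),
        if l + 3 ≤ n then Nat.choose (2 * (n - l) - 1) (n - l - 3) else 0 := by
  classical
  rw [CatalanWord_eq hn, finsum_mem_coe_finset]
  have step1 : ∑ w ∈ CW n, valleys w
      = ∑ l ∈ Finset.Icc 1 n, ∑ i ∈ Finset.range n,
          ((CW n).filter fun w =>
            i + l + 1 < n ∧ w.getD (i+1) 0 < w.getD i 0 ∧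
            (∀ j, j < l → w.getD (i+1+j) 0 = w.getD (i+1) 0) ∧
            w.getD (i+l+1) 0 = w.getD (i+1) 0 + 1).card := by
    have hper : ∀ w ∈ CW n, valleys w
        = ∑ l ∈ Finset.Icc 1 n, ∑ i ∈ Finset.range n,
            if (i + l + 1 < n ∧ w.getD (i+1) 0 < w.getD i 0 ∧
              (∀ j, j < l → w.getD (i+1+j) 0 = w.getD (i+1) 0) ∧
              w.getD (i+l+1) 0 = w.getD (i+1) 0 + 1) then 1 else 0 := by
      intro w hw
      have hlen : w.length = n := ((mem_CW hn).1 hw).1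
      unfold valleys lValleys
      rw [hlen]
      exact Finset.sum_congr rfl fun l _ => Finset.card_filter _ _
    rw [Finset.sum_congr rfl hper]
    rw [Finset.sum_comm]
    refine Finset.sum_congr rfl fun l _ => ?_
    rw [Finset.sum_comm]
    exact Finset.sum_congr rfl fun i _ => (Finset.card_filter _ _).symm
  rw [step1]
  have step2 : ∀ l ∈ Finset.Icc 1 n, ∀ i ∈ Finset.range n,
      ((CW n).filter fun w =>
        i + l + 1 < n ∧ w.getD (i+1) 0 < w.getD i 0 ∧
        (∀ j, j < l → w.getD (i+1+j) 0 = w.getD (i+1) 0) ∧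
        w.getD (i+l+1) 0 = w.getD (i+1) 0 + 1).card
      = if i + l + 1 < n then
          ∑ b ∈ Finset.range n,
            (if b + 1 ≤ i then R (b+1) (i-b-1) else 0) * R (b+1) (n-(i+l+2))
        else 0 := by
    intro l hl i hi
    rw [Finset.mem_Icc] at hl
    by_cases hc : i + l + 1 < n
    · rw [if_pos hc]
      have hfc : ((CW n).filter fun w =>
          i + l + 1 < n ∧ w.getD (i+1) 0 < w.getD i 0 ∧
          (∀ j, j < l → w.getD (i+1+j) 0 = w.getD (i+1) 0) ∧
          w.getD (i+l+1) 0 = w.getD (i+1) 0 + 1)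
          = ((CW n).filter fun w =>
          w.getD (i+1) 0 < w.getD i 0 ∧
          (∀ j, j < l → w.getD (i+1+j) 0 = w.getD (i+1) 0) ∧
          w.getD (i+l+1) 0 = w.getD (i+1) 0 + 1) := by
        apply Finset.filter_congr
        intro w _
        simp [hc]
      rw [hfc]
      rw [Finset.card_eq_sum_card_fiberwise
        (f := fun w => w.getD (i+1) 0) (t := Finset.range n)
        (fun w hw => by
          rw [Finset.mem_coe, Finset.mem_filter] at hw
          have := CW_getD_le hw.1 (i+1)
          simp only [Finset.mem_coe, Finset.mem_range]
          show w.getD (i+1) 0 < n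
          omega)]
      refine Finset.sum_congr rfl fun b _ => ?_
      rw [Finset.filter_filter]
      rw [occ_card hl.1 hc, Finset.card_product]
      congr 1
      have hE := E_eq_R (i+1) (b+1) (by omega)
      unfold E at hE
      rw [Nat.add_sub_cancel] at hE
      rw [hE]
      by_cases hbi : b + 1 ≤ i
      · rw [if_pos (by omega : b+1+1 ≤ i+1), if_pos hbi,
          show i+1-(b+1)-1 = i-b-1 by omega]
      · rw [if_neg (by omega), if_neg hbi]
    · rw [if_neg hc]
      rw [Finset.filter_false_of_mem (fun w _ => by tauto)]
      simp
  rw [Finset.sum_congr rfl (fun l hl => Finset.sum_congr rfl (step2 l hl))]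
  have step3 : ∀ l ∈ Finset.Icc 1 n,
      (∑ i ∈ Finset.range n, if i + l + 1 < n then
          ∑ b ∈ Finset.range n,
            (if b + 1 ≤ i then R (b+1) (i-b-1) else 0) * R (b+1) (n-(i+l+2))
        else 0)
      = if l + 3 ≤ n then Nat.choose (2 * (n - l) - 1) (n - l - 3) else 0 := by
    intro l hl
    rw [Finset.mem_Icc] at hl
    have hswap : (∑ i ∈ Finset.range n, if i + l + 1 < n then
          ∑ b ∈ Finset.range n,
            (if b + 1 ≤ i then R (b+1) (i-b-1) else 0) * R (b+1) (n-(i+l+2))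
        else 0)
        = ∑ b ∈ Finset.range n, ∑ i ∈ Finset.range n,
            (if i + l + 1 < n then
              (if b + 1 ≤ i then R (b+1) (i-b-1) else 0) * R (b+1) (n-(i+l+2))
            else 0) := by
      rw [Finset.sum_comm]
      refine Finset.sum_congr rfl fun i _ => ?_
      by_cases hc : i + l + 1 < n
      · simp [hc]
      · simp [hc]
    rw [hswap]
    by_cases hln : l + 3 ≤ n
    · rw [if_pos hln]
      have hinner : ∀ b ∈ Finset.range n,
          (∑ i ∈ Finset.range n,
            (if i + l + 1 < n then
              (if b + 1 ≤ i then R (b+1) (i-b-1) else 0) * R (b+1) (n-(i+l+2))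
            else 0))
          = if b + 1 ≤ n - l - 2 then R (2*b+4) (n-l-b-3) else 0 := by
        intro b _
        by_cases hb : b + 1 ≤ n - l - 2
        · rw [if_pos hb]
          have hsub : Finset.Ico (b+1) (n-l-1) ⊆ Finset.range n := by
            intro x hx
            rw [Finset.mem_Ico] at hx
            rw [Finset.mem_range]
            omega
          rw [← Finset.sum_subset hsub (fun i _ hni => by
            rw [Finset.mem_Ico, not_and_or] at hni
            by_cases hc : i + l + 1 < n
            · rw [if_pos hc, if_neg (by omega)]
              simp
            · rw [if_neg hc])]
          rw [Finset.sum_Ico_eq_sum_range]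
          rw [show n-l-1-(b+1) = (n-l-b-3)+1 by omega]
          have hterm : ∀ k ∈ Finset.range ((n-l-b-3)+1),
              (if (b+1+k) + l + 1 < n then
                (if b + 1 ≤ b+1+k then R (b+1) ((b+1+k)-b-1) else 0)
                  * R (b+1) (n-((b+1+k)+l+2))
              else 0)
              = R (b+1) k * R (b+1) ((n-l-b-3)-k) := by
            intro k hk
            rw [Finset.mem_range] at hk
            rw [if_pos (by omega), if_pos (by omega),
              show (b+1+k)-b-1 = k by omega,
              show n-((b+1+k)+l+2) = (n-l-b-3)-k by omega]
          rw [Finset.sum_congr rfl hterm]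
          rw [R_conv (b+1) (b+1) (n-l-b-3)]
          rw [show (b+1)+(b+1)+2 = 2*b+4 by omega]
        · rw [if_neg hb]
          apply Finset.sum_eq_zero
          intro i _
          by_cases hc : i + l + 1 < n
          · rw [if_pos hc, if_neg (by omega)]
            simp
          · rw [if_neg hc]
      rw [Finset.sum_congr rfl hinner]
      have hsub2 : Finset.range (n-l-2) ⊆ Finset.range n :=
        Finset.range_subset_range.2 (by omega)
      rw [← Finset.sum_subset hsub2 (fun b _ hbn => by
        rw [Finset.mem_range, not_lt] at hbn
        rw [if_neg (by omega)])]
      have hfin : (∑ b ∈ Finset.range (n-l-2),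
            if b + 1 ≤ n - l - 2 then R (2*b+4) (n-l-b-3) else 0)
          = ∑ b ∈ Finset.range ((n-l-3)+1), R (2*b+4) ((n-l-3)-b) := by
        rw [show n-l-2 = (n-l-3)+1 by omega]
        refine Finset.sum_congr rfl fun b hb => ?_
        rw [Finset.mem_range] at hb
        rw [if_pos (by omega), show n-l-b-3 = (n-l-3)-b by omega]
      rw [hfin, tele (n-l-3), show 2*(n-l-3)+5 = 2*(n-l)-1 by omega]
    · rw [if_neg hln]
      apply Finset.sum_eq_zero
      intro b _
      apply Finset.sum_eq_zero
      intro i _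
      by_cases hc : i + l + 1 < n
      · rw [if_pos hc, if_neg (by omega)]
        simp
      · rw [if_neg hc]
  rw [Finset.sum_congr rfl step3]
  rcases eq_or_lt_of_le hn with h1 | h1
  · rw [← h1]
    simp
  · rw [show n = (n-1)+1 by omega, Finset.sum_Icc_succ_top (by omega : 1 ≤ (n-1)+1)]
    rw [if_neg (by omega)]
    rw [show (n-1)+1 = n by omega]
    simp
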